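/- Let M : ℍ × 𝕃 → 𝕆 be a deterministic program with high-security input set ℍ and low-security input set 𝕃. Then ME[U](M) = log₂(|𝕆_𝕃|/|𝕃|), where 𝕆_𝕃 = {(o,ℓ) | ∃h ∈ ℍ. o = M(h,ℓ)}. -/

import Mathlib

/-!
Statement 12: For a deterministic program `M : ℍ × 𝕃 → 𝕆`:
`ME[U](M) = log₂(|𝕆_𝕃|/|𝕃|)`, where `𝕆_𝕃 = {(o,ℓ) | ∃h ∈ ℍ. o = M(h,ℓ)}`
and `U` is the uniform distribution on `ℍ × 𝕃`.
-/

variable {Hi Li Oi : Type*}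

/-- The uniform distribution on a finite type. -/
noncomputable def unif (X : Type*) [Fintype X] : X → ℝ :=
  fun _ => (Fintype.card X : ℝ)⁻¹

/-- Marginal probability `μ(L = ℓ)`. -/
noncomputable def pL [Fintype Hi] (μ : Hi × Li → ℝ) (ℓ : Li) : ℝ := ∑ h, μ (h, ℓ)

/-- Joint probability `μ(O = o, L = ℓ)` where `O = M(H,L)`. -/
noncomputable def pOL [Fintype Hi] [DecidableEq Oi] (M : Hi × Li → Oi) (μ : Hi × Li → ℝ)
    (o : Oi) (ℓ : Li) : ℝ := ∑ h, if M (h, ℓ) = o then μ (h, ℓ) else 0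

/-- Conditional vulnerability `𝓥[μ](H|L)`. -/
noncomputable def VHL [Fintype Hi] [Fintype Li] [Nonempty Hi] (μ : Hi × Li → ℝ) : ℝ :=
  ∑ ℓ : Li, pL μ ℓ *
    Finset.univ.sup' Finset.univ_nonempty (fun h : Hi => μ (h, ℓ) / pL μ ℓ)

/-- Conditional vulnerability `𝓥[μ](H|O,L)` where `O = M(H,L)`. -/
noncomputable def VHOL [Fintype Hi] [Fintype Li] [Fintype Oi] [DecidableEq Oi] [Nonempty Hi]
    (M : Hi × Li → Oi) (μ : Hi × Li → ℝ) : ℝ :=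
  ∑ ℓ : Li, ∑ o : Oi, pOL M μ o ℓ *
    Finset.univ.sup' Finset.univ_nonempty
      (fun h : Hi => (if M (h, ℓ) = o then μ (h, ℓ) else 0) / pOL M μ o ℓ)

/-- Min-entropy-based QIF `ME[μ](M) = 𝓗∞[μ](H|L) − 𝓗∞[μ](H|O,L)`. -/
noncomputable def ME [Fintype Hi] [Fintype Li] [Fintype Oi] [DecidableEq Oi] [Nonempty Hi]
    (M : Hi × Li → Oi) (μ : Hi × Li → ℝ) : ℝ :=
  Real.logb 2 (1 / VHL μ) - Real.logb 2 (1 / VHOL M μ)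

/-- `ME[U](M) = log₂(|𝕆_𝕃|/|𝕃|)` with `𝕆_𝕃 = {(o,ℓ) | ∃h. o = M(h,ℓ)}`. -/
theorem ME_unif_eq
    [Fintype Hi] [Fintype Li] [Fintype Oi] [DecidableEq Oi] [Nonempty Hi] [Nonempty Li]
    (M : Hi × Li → Oi) :
    ME M (unif (Hi × Li)) =
      Real.logb 2
        ((Set.ncard {p : Oi × Li | ∃ h : Hi, p.1 = M (h, p.2)} : ℝ) /
          (Fintype.card Li : ℝ)) := by
  classical
  set m : ℝ := (Fintype.card Hi : ℝ) with hm
  set n : ℝ := (Fintype.card Li : ℝ) with hn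
  have hm0 : (0:ℝ) < m := by
    rw [hm]; exact_mod_cast (Fintype.card_pos (α := Hi))
  have hn0 : (0:ℝ) < n := by
    rw [hn]; exact_mod_cast (Fintype.card_pos (α := Li))
  set c : ℝ := (m * n)⁻¹ with hc
  have hc0 : (0:ℝ) < c := by positivity
  have huv : ∀ x : Hi × Li, unif (Hi × Li) x = c := by
    intro x; simp [unif, hc, Fintype.card_prod, hm, hn]
  have hpL : ∀ ℓ : Li, pL (unif (Hi × Li)) ℓ = n⁻¹ := by
    intro ℓ
    simp only [pL, huv]
    rw [Finset.sum_const, Finset.card_univ, nsmul_eq_mul, hc, ← hm]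
    field_simp
  have hVHL : VHL (unif (Hi × Li)) = m⁻¹ := by
    unfold VHL
    have : ∀ ℓ : Li,
        (pL (unif (Hi × Li)) ℓ) *
          Finset.univ.sup' Finset.univ_nonempty
            (fun h : Hi => unif (Hi × Li) (h, ℓ) / pL (unif (Hi × Li)) ℓ) = n⁻¹ * m⁻¹ := by
      intro ℓ
      have hfc : (fun h : Hi => unif (Hi × Li) (h, ℓ) / pL (unif (Hi × Li)) ℓ)
          = fun _ : Hi => c / n⁻¹ := by
        funext h; rw [huv, hpL]
      rw [hfc, Finset.sup'_const, hpL]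
      rw [hc]
      field_simp
    rw [Finset.sum_congr rfl (fun ℓ _ => this ℓ), Finset.sum_const, Finset.card_univ,
      nsmul_eq_mul, ← hn]
    field_simp
  -- counting function
  set N : Oi → Li → ℕ := fun o ℓ => (Finset.univ.filter (fun h : Hi => M (h, ℓ) = o)).card
    with hN
  have hpOL : ∀ (o : Oi) (ℓ : Li), pOL M (unif (Hi × Li)) o ℓ = (N o ℓ : ℝ) * c := by
    intro o ℓ
    simp only [pOL, huv]
    rw [← Finset.sum_filter, Finset.sum_const, nsmul_eq_mul, hN]
  have hterm : ∀ (o : Oi) (ℓ : Li),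
      pOL M (unif (Hi × Li)) o ℓ *
        Finset.univ.sup' Finset.univ_nonempty
          (fun h : Hi => (if M (h, ℓ) = o then unif (Hi × Li) (h, ℓ) else 0)
            / pOL M (unif (Hi × Li)) o ℓ)
      = if ∃ h : Hi, M (h, ℓ) = o then c else 0 := by
    intro o ℓ
    by_cases hex : ∃ h : Hi, M (h, ℓ) = o
    · obtain ⟨h0, hh0⟩ := hex
      have hNpos : 0 < N o ℓ := by
        rw [hN]
        exact Finset.card_pos.mpr ⟨h0, by simp [hh0]⟩
      have hNR : (0:ℝ) < (N o ℓ : ℝ) := Nat.cast_pos.mpr hNpos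
      have hsup : Finset.univ.sup' Finset.univ_nonempty
          (fun h : Hi => (if M (h, ℓ) = o then unif (Hi × Li) (h, ℓ) else 0)
            / pOL M (unif (Hi × Li)) o ℓ) = ((N o ℓ : ℝ))⁻¹ := by
        apply le_antisymm
        · apply Finset.sup'_le
          intro h _
          rw [hpOL, huv]
          by_cases hmh : M (h, ℓ) = o
          · rw [if_pos hmh, div_le_iff₀ (by positivity),
              ← mul_assoc, inv_mul_cancel₀ hNR.ne', one_mul]
          · rw [if_neg hmh, zero_div]
            positivity
        · have := Finset.le_sup' (fun h : Hi =>
            (if M (h, ℓ) = o then unif (Hi × Li) (h, ℓ) else 0)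
              / pOL M (unif (Hi × Li)) o ℓ) (Finset.mem_univ h0)
          refine le_trans (le_of_eq ?_) this
          rw [hpOL, huv, if_pos hh0]
          field_simp
      rw [hsup, hpOL, if_pos ⟨h0, hh0⟩]
      field_simp
    · have hNz : N o ℓ = 0 := by
        rw [hN, Finset.card_eq_zero, Finset.filter_eq_empty_iff]
        intro h _
        exact fun hcon => hex ⟨h, hcon⟩
      rw [hpOL, hNz, if_neg hex]
      simp
  -- the key cardinality
  set K : ℕ := (Finset.univ.filter (fun p : Oi × Li => ∃ h : Hi, p.1 = M (h, p.2))).card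
    with hK
  have hVHOL : VHOL M (unif (Hi × Li)) = (K : ℝ) * c := by
    unfold VHOL
    rw [Finset.sum_congr rfl (fun ℓ _ => Finset.sum_congr rfl (fun o _ => hterm o ℓ))]
    have hsum : (∑ ℓ : Li, ∑ o : Oi, if ∃ h : Hi, M (h, ℓ) = o then c else 0)
        = ∑ p : Oi × Li, (if ∃ h : Hi, p.1 = M (h, p.2) then c else 0) := by
      rw [Fintype.sum_prod_type, Finset.sum_comm]
      refine Finset.sum_congr rfl fun ℓ _ => Finset.sum_congr rfl fun o _ => ?_
      simp [eq_comm]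
    rw [hsum, ← Finset.sum_filter, Finset.sum_const, nsmul_eq_mul, hK]
  have hncard : (Set.ncard {p : Oi × Li | ∃ h : Hi, p.1 = M (h, p.2)} : ℝ) = (K : ℝ) := by
    congr 1
    rw [Set.ncard_eq_toFinset_card', hK]
    congr 1
    ext p
    simp
  have hKpos : (0:ℝ) < (K : ℝ) := by
    have : (Finset.univ.filter (fun p : Oi × Li => ∃ h : Hi, p.1 = M (h, p.2))).Nonempty := by
      obtain ⟨ℓ0⟩ := (inferInstance : Nonempty Li)
      obtain ⟨h0⟩ := (inferInstance : Nonempty Hi)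
      exact ⟨(M (h0, ℓ0), ℓ0), by simp; exact ⟨h0, rfl⟩⟩
    exact_mod_cast Finset.card_pos.mpr this
  rw [hncard]
  unfold ME
  rw [hVHL, hVHOL]
  rw [← Real.logb_div (one_div_ne_zero (inv_ne_zero hm0.ne'))
    (one_div_ne_zero (mul_pos hKpos hc0).ne')]
  congr 1
  rw [hc]
  field_simp
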